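/- Let X and Y be real Banach spaces, k ∈ ℕ, p ≥ 1, and let μ be a finite Borel measure on X × X^k satisfying the Radon–Nikodym domination assumption with constants C_1, …, C_k. Then for every k-times continuously Fréchet differentiable F : X → Y and every 1 ≤ i ≤ k: ∫_{X × X^i} ‖D^i F(x)(h^1, …, h^i)‖_Y^p dμ^{0:i}(x, h^1, …, h^i) ≤ C_i · ∫_X ‖D^i F(x)‖_{L^i(X,Y)}^p dμ^0(x). Consequently ‖F‖_{W^{k,p}_{B,μ}} ≤ max(1, C_1, …, C_k)^{1/p} · ‖F‖_{W^{k,p}_{μ^0}}. -/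

import Mathlib

open MeasureTheory
open scoped Topology ENNReal NNReal

/-- The marginal `μ^{0:i}` on `X × X^i` of a measure `μ` on `X × X^k`, for `i ≤ k`:
the pushforward under `(x, h^1, …, h^k) ↦ (x, h^1, …, h^i)`. -/
noncomputable def marginalUpTo {X : Type*} [MeasurableSpace X] {k : ℕ}
    (μ : Measure (X × (Fin k → X))) (i : ℕ) (hik : i ≤ k) :
    Measure (X × (Fin i → X)) :=
  μ.map fun z => (z.1, fun j => z.2 (Fin.castLE hik j))

lemma domination_lintegral {X Z : Type*} [MeasurableSpace X] [MeasurableSpace Z]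
    (ν : Measure Z) (f : Z → X) (hf : Measurable f) (w : Z → ℝ≥0∞) (hw : Measurable w)
    (μ0 : Measure X) (c : ℝ≥0∞)
    (hdom : ∀ A : Set X, MeasurableSet A → ∫⁻ z in f ⁻¹' A, w z ∂ν ≤ c * μ0 A)
    (g : X → ℝ≥0∞) (hg : Measurable g) :
    ∫⁻ z, g (f z) * w z ∂ν ≤ c * ∫⁻ x, g x ∂μ0 := by
  have h1 : ∫⁻ z, g (f z) * w z ∂ν = ∫⁻ x, g x ∂((ν.withDensity w).map f) := by
    rw [lintegral_map hg hf, lintegral_withDensity_eq_lintegral_mul _ hw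
      (show Measurable fun z => g (f z) from hg.comp hf)]
    simp only [Pi.mul_apply, Function.comp]
    exact lintegral_congr fun z => mul_comm _ _
  rw [h1]
  have hle : (ν.withDensity w).map f ≤ c • μ0 := by
    refine Measure.le_iff.mpr fun A hA => ?_
    rw [Measure.map_apply hf hA, withDensity_apply _ (hf hA)]
    simpa using hdom A hA
  calc ∫⁻ x, g x ∂((ν.withDensity w).map f) ≤ ∫⁻ x, g x ∂(c • μ0) :=
        lintegral_mono' hle le_rfl
    _ = c * ∫⁻ x, g x ∂μ0 := lintegral_smul_measure _ _

lemma marginal_lintegral_fst {X : Type*} [MeasurableSpace X] {k : ℕ}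
    (μ : Measure (X × (Fin k → X))) (i : ℕ) (hik : i ≤ k)
    (h : X → ℝ≥0∞) (hh : Measurable h) :
    ∫⁻ z, h z.1 ∂(marginalUpTo μ i hik) = ∫⁻ x, h x ∂(μ.map Prod.fst) := by
  have he : Measurable fun z : X × (Fin k → X) =>
      (z.1, fun j : Fin i => z.2 (Fin.castLE hik j)) :=
    measurable_fst.prodMk (measurable_pi_lambda _ fun j =>
      (measurable_pi_apply _).comp measurable_snd)
  rw [marginalUpTo, lintegral_map (show Measurable fun z : X × (Fin i → X) => h z.1
      from hh.comp measurable_fst) he,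
    lintegral_map hh measurable_fst]

lemma ptwise_bound {X Y : Type*} [NormedAddCommGroup X] [NormedSpace ℝ X]
    [NormedAddCommGroup Y] [NormedSpace ℝ Y] {i : ℕ} (p : ℝ) (hp : 0 ≤ p)
    (f : ContinuousMultilinearMap ℝ (fun _ : Fin i => X) Y) (m : Fin i → X) :
    (‖f m‖₊ : ℝ≥0∞) ^ p ≤ (‖f‖₊ : ℝ≥0∞) ^ p * ∏ r, (‖m r‖₊ : ℝ≥0∞) ^ p := by
  have h1 : ‖f m‖₊ ≤ ‖f‖₊ * ∏ r, ‖m r‖₊ := f.le_opNNNorm m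
  have h2 : (‖f m‖₊ : ℝ≥0∞) ^ p ≤ ((‖f‖₊ * ∏ r, ‖m r‖₊ : ℝ≥0) : ℝ≥0∞) ^ p :=
    ENNReal.rpow_le_rpow (by exact_mod_cast h1) hp
  refine h2.trans_eq ?_
  push_cast
  rw [ENNReal.mul_rpow_of_nonneg _ _ hp]
  rw [ENNReal.prod_rpow_of_nonneg hp]

theorem stmt_6 {X Y : Type*} [NormedAddCommGroup X] [NormedSpace ℝ X] [CompleteSpace X]
    [NormedAddCommGroup Y] [NormedSpace ℝ Y] [CompleteSpace Y]
    [MeasurableSpace X] [BorelSpace X]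
    (k : ℕ) (p : ℝ) (hp : 1 ≤ p)
    (μ : Measure (X × (Fin k → X))) [IsFiniteMeasure μ]
    (C : ℕ → ℝ) (hCpos : ∀ i, 1 ≤ i → i ≤ k → 0 < C i)
    (hRNfin : ∀ i, 1 ≤ i → ∀ hik : i ≤ k,
      ∫⁻ z, ∏ r, (‖z.2 r‖₊ : ℝ≥0∞) ^ p ∂(marginalUpTo μ i hik) < ⊤)
    (hRNdom : ∀ i, 1 ≤ i → ∀ hik : i ≤ k, ∀ A : Set X, MeasurableSet A →
      ∫⁻ z in Prod.fst ⁻¹' A, ∏ r, (‖z.2 r‖₊ : ℝ≥0∞) ^ p ∂(marginalUpTo μ i hik) ≤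
        ENNReal.ofReal (C i) * (μ.map Prod.fst) A)
    (F : X → Y) (hF : ContDiff ℝ k F) :
    (∀ i, 1 ≤ i → ∀ hik : i ≤ k,
      ∫⁻ z, (‖iteratedFDeriv ℝ i F z.1 z.2‖₊ : ℝ≥0∞) ^ p ∂(marginalUpTo μ i hik) ≤
        ENNReal.ofReal (C i) *
          ∫⁻ x, (‖iteratedFDeriv ℝ i F x‖₊ : ℝ≥0∞) ^ p ∂(μ.map Prod.fst)) ∧
    (⨆ i : Fin (k + 1),
        ∫⁻ z, (‖iteratedFDeriv ℝ (i : ℕ) F z.1 z.2‖₊ : ℝ≥0∞) ^ p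
          ∂(marginalUpTo μ (i : ℕ) i.is_le)) ≤
      max 1 ((Finset.Icc 1 k).sup fun i => ENNReal.ofReal (C i)) *
        ⨆ i : Fin (k + 1),
          ∫⁻ x, (‖iteratedFDeriv ℝ (i : ℕ) F x‖₊ : ℝ≥0∞) ^ p ∂(μ.map Prod.fst) := by
  have hp0 : (0 : ℝ) ≤ p := by linarith
  -- measurability of `g_i`
  have hg : ∀ i : ℕ, i ≤ k →
      Measurable fun x => (‖iteratedFDeriv ℝ i F x‖₊ : ℝ≥0∞) ^ p := by
    intro i hik
    have hc : Continuous (iteratedFDeriv ℝ i F) :=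
      hF.continuous_iteratedFDeriv (by exact_mod_cast hik)
    exact (hc.nnnorm.measurable.coe_nnreal_ennreal).pow_const p
  -- Part 1
  have main : ∀ i, 1 ≤ i → ∀ hik : i ≤ k,
      ∫⁻ z, (‖iteratedFDeriv ℝ i F z.1 z.2‖₊ : ℝ≥0∞) ^ p ∂(marginalUpTo μ i hik) ≤
        ENNReal.ofReal (C i) *
          ∫⁻ x, (‖iteratedFDeriv ℝ i F x‖₊ : ℝ≥0∞) ^ p ∂(μ.map Prod.fst) := by
    intro i h1i hik
    have hw : Measurable fun z : X × (Fin i → X) => ∏ r, (‖z.2 r‖₊ : ℝ≥0∞) ^ p := by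
      refine Finset.measurable_prod _ fun r _ => ?_
      exact ((((measurable_pi_apply r).comp
        measurable_snd).nnnorm).coe_nnreal_ennreal).pow_const p
    calc ∫⁻ z, (‖iteratedFDeriv ℝ i F z.1 z.2‖₊ : ℝ≥0∞) ^ p ∂(marginalUpTo μ i hik)
        ≤ ∫⁻ z, (‖iteratedFDeriv ℝ i F z.1‖₊ : ℝ≥0∞) ^ p *
            ∏ r, (‖z.2 r‖₊ : ℝ≥0∞) ^ p ∂(marginalUpTo μ i hik) :=
          lintegral_mono fun z => ptwise_bound p hp0 _ _
      _ ≤ ENNReal.ofReal (C i) *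
            ∫⁻ x, (‖iteratedFDeriv ℝ i F x‖₊ : ℝ≥0∞) ^ p ∂(μ.map Prod.fst) :=
          domination_lintegral _ Prod.fst measurable_fst _ hw _ _
            (hRNdom i h1i hik) _ (hg i hik)
  refine ⟨main, ?_⟩
  set M := max 1 ((Finset.Icc 1 k).sup fun i => ENNReal.ofReal (C i)) with hM
  -- uniform per-index bound
  have key : ∀ n : ℕ, ∀ hn : n ≤ k,
      ∫⁻ z, (‖iteratedFDeriv ℝ n F z.1 z.2‖₊ : ℝ≥0∞) ^ p ∂(marginalUpTo μ n hn) ≤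
        M * ∫⁻ x, (‖iteratedFDeriv ℝ n F x‖₊ : ℝ≥0∞) ^ p ∂(μ.map Prod.fst) := by
    intro n hn
    rcases Nat.eq_zero_or_pos n with rfl | hn1
    · have heq : ∫⁻ z, (‖iteratedFDeriv ℝ 0 F z.1 z.2‖₊ : ℝ≥0∞) ^ p
          ∂(marginalUpTo μ 0 hn) =
          ∫⁻ x, (‖iteratedFDeriv ℝ 0 F x‖₊ : ℝ≥0∞) ^ p ∂(μ.map Prod.fst) := by
        rw [← marginal_lintegral_fst μ 0 hn _ (hg 0 (Nat.zero_le k))]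
        refine lintegral_congr fun z => ?_
        have hz : ‖(iteratedFDeriv ℝ 0 F z.1) z.2‖₊ = ‖iteratedFDeriv ℝ 0 F z.1‖₊ := by
          apply NNReal.coe_injective
          simp [iteratedFDeriv_zero_apply, norm_iteratedFDeriv_zero]
        rw [hz]
      rw [heq]
      exact le_mul_of_one_le_left zero_le (le_max_left _ _)
    · refine (main n hn1 hn).trans (mul_le_mul_left ?_ _)
      exact le_trans (Finset.le_sup (f := fun i => ENNReal.ofReal (C i)) (Finset.mem_Icc.mpr ⟨hn1, hn⟩)) (le_max_right _ _)
  refine iSup_le fun i => ?_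
  refine (key (i : ℕ) i.is_le).trans (mul_le_mul_right ?_ _)
  exact le_iSup (fun j : Fin (k + 1) =>
    ∫⁻ x, (‖iteratedFDeriv ℝ (j : ℕ) F x‖₊ : ℝ≥0∞) ^ p ∂(μ.map Prod.fst)) i
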